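/- Let ω ∈ ℝ, let V : ℝ → ℝ and H : ℝ → ℂ be continuous, and let u : ℝ → ℂ be a C² solution of u'' − Vu = H which is weakly outgoing, i.e. there exists c ∈ ℂ with u(s) − c·e^{−iωs} → 0 and u'(s) + iω·c·e^{−iωs} → 0 as s → −∞, and there exists ε > 0 with e^{εs}·(|u(s)| + |u'(s)|) → 0 as s → +∞. Let h : ℝ → ℝ be a bounded C² function with bounded second derivative such that h'(s) → 0 as s → −∞ and as s → +∞. Assume that the functions s ↦ h·|u'|², s ↦ (h·V − (1/2)·h'')·|u|², and s ↦ h·Re(H·conj(u)) are absolutely integrable on ℝ. Then ∫_{−∞}^{∞} [ h(s)·|u'(s)|² + (h(s)·V(s) − (1/2)·h''(s))·|u(s)|² ] ds = −∫_{−∞}^{∞} h(s)·Re(H(s)·conj(u(s))) ds. -/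

import Mathlib

open MeasureTheory Filter

/-- Integrated multiplier identity with multiplier `h` for weakly outgoing solutions of
`u'' − Vu = H`:
`∫ (h·|u'|² + (hV − h''/2)·|u|²) = −∫ h·Re(H·conj u)`. -/
theorem statement3 (ω : ℝ) (V : ℝ → ℝ) (H u : ℝ → ℂ) (h : ℝ → ℝ)
    (hV : Continuous V) (hH : Continuous H)
    (hu : ContDiff ℝ 2 u)
    (heq : ∀ s : ℝ, deriv (deriv u) s - (V s : ℂ) * u s = H s)
    (hout1 : ∃ c : ℂ,
      Tendsto (fun s : ℝ => u s - c * Complex.exp (-Complex.I * (ω : ℂ) * (s : ℂ)))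
        atBot (nhds 0) ∧
      Tendsto (fun s : ℝ =>
          deriv u s + Complex.I * (ω : ℂ) * c * Complex.exp (-Complex.I * (ω : ℂ) * (s : ℂ)))
        atBot (nhds 0))
    (hout2 : ∃ ε : ℝ, 0 < ε ∧
      Tendsto (fun s : ℝ => Real.exp (ε * s) * (‖u s‖ + ‖deriv u s‖)) atTop (nhds 0))
    (hhC2 : ContDiff ℝ 2 h)
    (hhbdd : ∃ B : ℝ, ∀ s : ℝ, |h s| ≤ B)
    (hh2bdd : ∃ B : ℝ, ∀ s : ℝ, |deriv (deriv h) s| ≤ B)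
    (hh'bot : Tendsto (deriv h) atBot (nhds 0))
    (hh'top : Tendsto (deriv h) atTop (nhds 0))
    (hint1 : Integrable (fun s : ℝ => h s * ‖deriv u s‖ ^ 2))
    (hint2 : Integrable (fun s : ℝ =>
      (h s * V s - (1 / 2) * deriv (deriv h) s) * ‖u s‖ ^ 2))
    (hint3 : Integrable (fun s : ℝ => h s * (H s * (starRingEnd ℂ) (u s)).re)) :
    ∫ s : ℝ, (h s * ‖deriv u s‖ ^ 2
        + (h s * V s - (1 / 2) * deriv (deriv h) s) * ‖u s‖ ^ 2)
      = -∫ s : ℝ, h s * (H s * (starRingEnd ℂ) (u s)).re := by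
  obtain ⟨c, hcb1, hcb2⟩ := hout1
  obtain ⟨ε, hε, hεt⟩ := hout2
  obtain ⟨B, hB⟩ := hhbdd
  have hB0 : 0 ≤ B := le_trans (abs_nonneg _) (hB 0)
  have hnorm : ∀ z : ℂ, (z * star z).re = ‖z‖ ^ 2 := fun z => by
    rw [Complex.star_def, Complex.mul_conj]
    simp [← Complex.ofReal_pow, Complex.normSq_eq_norm_sq]
  -- differentiability
  have hud : Differentiable ℝ u := hu.differentiable (by norm_num)
  have hu'C1 : ContDiff ℝ 1 (deriv u) := by
    have h2 : ContDiff ℝ (1 + 1) u := by norm_num; exact hu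
    exact (contDiff_succ_iff_deriv.mp h2).2.2
  have hu'd : Differentiable ℝ (deriv u) := hu'C1.differentiable one_ne_zero
  have hhd : Differentiable ℝ h := hhC2.differentiable (by norm_num)
  have hh'C1 : ContDiff ℝ 1 (deriv h) := by
    have h2 : ContDiff ℝ (1 + 1) h := by norm_num; exact hhC2
    exact (contDiff_succ_iff_deriv.mp h2).2.2
  have hh'd : Differentiable ℝ (deriv h) := hh'C1.differentiable one_ne_zero
  -- the multiplier functional
  set R : ℝ → ℝ := fun s => (deriv u s * star (u s)).re with hR
  set N : ℝ → ℝ := fun s => (u s * star (u s)).re with hN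
  set F : ℝ → ℝ := fun s => h s * R s - 1 / 2 * (deriv h s * N s) with hF
  set G : ℝ → ℝ := fun s =>
    (h s * ‖deriv u s‖ ^ 2 + (h s * V s - 1 / 2 * deriv (deriv h) s) * ‖u s‖ ^ 2)
      + h s * (H s * (starRingEnd ℂ) (u s)).re with hG
  have hNnorm : ∀ s, N s = ‖u s‖ ^ 2 := fun s => hnorm (u s)
  -- derivative of F
  have hderivF : ∀ s, HasDerivAt F (G s) s := by
    intro s
    have hD1 : HasDerivAt u (deriv u s) s := (hud s).hasDerivAt
    have hD2 : HasDerivAt (deriv u) (deriv (deriv u) s) s := (hu'd s).hasDerivAt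
    have hDh : HasDerivAt h (deriv h s) s := (hhd s).hasDerivAt
    have hDh' : HasDerivAt (deriv h) (deriv (deriv h) s) s := (hh'd s).hasDerivAt
    have hDR : HasDerivAt R
        ((deriv (deriv u) s * star (u s) + deriv u s * star (deriv u s)).re) s :=
      Complex.reCLM.hasFDerivAt.comp_hasDerivAt s (hD2.mul hD1.star)
    have hDN : HasDerivAt N
        ((deriv u s * star (u s) + u s * star (deriv u s)).re) s :=
      Complex.reCLM.hasFDerivAt.comp_hasDerivAt s (hD1.mul hD1.star)
    have hDF : HasDerivAt F
        ((deriv h s * R s + h s * (deriv (deriv u) s * star (u s)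
            + deriv u s * star (deriv u s)).re)
          - 1 / 2 * (deriv (deriv h) s * N s
            + deriv h s * (deriv u s * star (u s) + u s * star (deriv u s)).re)) s :=
      (hDh.mul hDR).sub ((hDh'.mul hDN).const_mul (1 / 2 : ℝ))
    have e1 : (u s * star (deriv u s)).re = R s := by
      have e0 : u s * star (deriv u s) = star (deriv u s * star (u s)) := by
        rw [star_mul, star_star]
      rw [e0]
      exact Complex.conj_re _
    have e2 : deriv (deriv u) s = (V s : ℂ) * u s + H s := by
      have := heq s; linear_combination this
    have e3 : (deriv (deriv u) s * star (u s) + deriv u s * star (deriv u s)).re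
        = V s * ‖u s‖ ^ 2 + (H s * (starRingEnd ℂ) (u s)).re + ‖deriv u s‖ ^ 2 := by
      rw [e2, Complex.add_re, hnorm (deriv u s)]
      have : ((V s : ℂ) * u s + H s) * star (u s)
          = (V s : ℂ) * (u s * star (u s)) + H s * (starRingEnd ℂ) (u s) := by
        rw [Complex.star_def]; ring
      rw [this, Complex.add_re, Complex.re_ofReal_mul, hnorm (u s)]
    have e4 : (deriv u s * star (u s) + u s * star (deriv u s)).re = 2 * R s := by
      rw [Complex.add_re, e1]; ring
    have : (deriv h s * R s + h s * (deriv (deriv u) s * star (u s)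
            + deriv u s * star (deriv u s)).re)
          - 1 / 2 * (deriv (deriv h) s * N s
            + deriv h s * (deriv u s * star (u s) + u s * star (deriv u s)).re) = G s := by
      rw [e3, e4, hG, hNnorm s]; ring
    exact this ▸ hDF
  -- limit at +∞
  have hg0 : Tendsto (fun s : ℝ => ‖u s‖ + ‖deriv u s‖) atTop (nhds 0) := by
    apply squeeze_zero' (Eventually.of_forall fun s => by positivity)
      (g := fun s : ℝ => Real.exp (ε * s) * (‖u s‖ + ‖deriv u s‖)) ?_ hεt
    filter_upwards [eventually_ge_atTop (0 : ℝ)] with s hs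
    exact le_mul_of_one_le_left (by positivity) (Real.one_le_exp (by positivity))
  have hutop : Tendsto (fun s : ℝ => ‖u s‖) atTop (nhds 0) :=
    squeeze_zero (fun s => norm_nonneg _) (fun s => le_add_of_nonneg_right (norm_nonneg _)) hg0
  have hu'top : Tendsto (fun s : ℝ => ‖deriv u s‖) atTop (nhds 0) :=
    squeeze_zero (fun s => norm_nonneg _) (fun s => le_add_of_nonneg_left (norm_nonneg _)) hg0
  have hFtop : Tendsto F atTop (nhds 0) := by
    have t1 : Tendsto (fun s => h s * R s) atTop (nhds 0) := by
      apply squeeze_zero_norm (a := fun s => B * (‖deriv u s‖ * ‖u s‖))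
      · intro s
        have : |R s| ≤ ‖deriv u s * star (u s)‖ := Complex.abs_re_le_norm _
        calc ‖h s * R s‖ = |h s| * |R s| := abs_mul _ _
          _ ≤ B * (‖deriv u s‖ * ‖u s‖) := by
              refine mul_le_mul (hB s) (this.trans ?_) (abs_nonneg _) hB0
              rw [norm_mul, norm_star]
      · simpa using (hu'top.mul hutop).const_mul B
    have t2 : Tendsto (fun s => 1 / 2 * (deriv h s * N s)) atTop (nhds 0) := by
      have hNt : Tendsto N atTop (nhds 0) := by
        have hNe : N = fun s => ‖u s‖ ^ 2 := funext hNnorm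
        rw [hNe]
        simpa using hutop.pow 2
      simpa using (hh'top.mul hNt).const_mul (1 / 2 : ℝ)
    have := t1.sub t2
    rw [sub_zero] at this
    exact this
  -- limit at -∞
  set E : ℝ → ℂ := fun s => Complex.exp (-Complex.I * (ω : ℂ) * (s : ℂ)) with hE
  have hEnorm : ∀ s : ℝ, ‖E s‖ = 1 := fun s => by
    rw [hE]; simp [Complex.norm_exp]
  have hubdd : ∀ᶠ s in atBot, ‖u s‖ ≤ ‖c‖ + 1 := by
    have h1 : ∀ᶠ s in atBot, dist (u s - c * E s) 0 < 1 :=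
      Metric.tendsto_nhds.mp hcb1 1 one_pos
    filter_upwards [h1] with s hs
    rw [dist_zero_right] at hs
    calc ‖u s‖ = ‖(u s - c * E s) + c * E s‖ := by ring_nf
      _ ≤ ‖u s - c * E s‖ + ‖c * E s‖ := norm_add_le _ _
      _ ≤ 1 + ‖c‖ := by
          rw [norm_mul, hEnorm s, mul_one]
          exact add_le_add hs.le le_rfl
      _ = ‖c‖ + 1 := by ring
  have hkey : ∀ s : ℝ, deriv u s * star (u s) + Complex.I * ω * ((‖c‖ ^ 2 : ℝ) : ℂ)
      = (deriv u s + Complex.I * ω * c * E s) * star (u s)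
        - (Complex.I * ω * c * E s) * star (u s - c * E s) := by
    intro s
    have hE1 : E s * star (E s) = 1 := by
      rw [Complex.star_def, Complex.mul_conj]
      have h1 : Complex.normSq (E s) = 1 := by
        have h2 := hEnorm s
        rw [Complex.normSq_eq_norm_sq, h2]; norm_num
      rw [h1]; norm_num
    have hc1 : c * star c = ((‖c‖ ^ 2 : ℝ) : ℂ) := by
      rw [Complex.star_def, Complex.mul_conj]
      simp [Complex.normSq_eq_norm_sq]
    simp only [star_sub, star_mul']
    linear_combination -(Complex.I * (ω : ℂ) * star c * c * hE1) - Complex.I * (ω : ℂ) * hc1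
  have hP1 : Tendsto (fun s => (deriv u s + Complex.I * ω * c * E s) * star (u s))
      atBot (nhds 0) := by
    apply squeeze_zero_norm'
      (a := fun s => ‖deriv u s + Complex.I * ω * c * E s‖ * (‖c‖ + 1))
    · filter_upwards [hubdd] with s hs
      rw [norm_mul, norm_star]
      exact mul_le_mul_of_nonneg_left hs (norm_nonneg _)
    · have h2 := hcb2.norm.mul_const (‖c‖ + 1)
      rw [norm_zero, zero_mul] at h2
      exact h2
  have hP2 : Tendsto (fun s => (Complex.I * ω * c * E s) * star (u s - c * E s))
      atBot (nhds 0) := by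
    apply squeeze_zero_norm
      (a := fun s => ‖Complex.I * (ω:ℂ) * c‖ * ‖u s - c * E s‖)
    · intro s
      rw [norm_mul, norm_star, norm_mul, hEnorm s, mul_one]
    · have h2 := hcb1.norm.const_mul ‖Complex.I * (ω:ℂ) * c‖
      rw [norm_zero, mul_zero] at h2
      exact h2
  have hRbot : Tendsto R atBot (nhds 0) := by
    have hsum : Tendsto (fun s => deriv u s * star (u s)
        + Complex.I * ω * ((‖c‖ ^ 2 : ℝ) : ℂ)) atBot (nhds 0) := by
      have := hP1.sub hP2
      simp only [← hkey] at this
      simpa using this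
    have hlim : Tendsto (fun s => deriv u s * star (u s)) atBot
        (nhds (-(Complex.I * ω * ((‖c‖ ^ 2 : ℝ) : ℂ)))) := by
      have := hsum.sub_const (Complex.I * ω * ((‖c‖ ^ 2 : ℝ) : ℂ))
      simpa using this
    have hre : (-(Complex.I * (ω : ℂ) * ((‖c‖ ^ 2 : ℝ) : ℂ))).re = 0 := by
      simp [← Complex.ofReal_pow]
    have h3 := (Complex.continuous_re.tendsto _).comp hlim
    simp only [Function.comp_def] at h3
    rw [hre] at h3
    exact h3
  have hFbot : Tendsto F atBot (nhds 0) := by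
    have t1 : Tendsto (fun s => h s * R s) atBot (nhds 0) := by
      apply squeeze_zero_norm (a := fun s => B * |R s|)
      · intro s
        rw [norm_mul]
        exact mul_le_mul_of_nonneg_right (hB s) (abs_nonneg _)
      · simpa using (hRbot.abs).const_mul B
    have t2 : Tendsto (fun s => 1 / 2 * (deriv h s * N s)) atBot (nhds 0) := by
      apply squeeze_zero_norm'
        (a := fun s => 1 / 2 * (|deriv h s| * (‖c‖ + 1) ^ 2))
      · filter_upwards [hubdd] with s hs
        rw [Real.norm_eq_abs, abs_mul, abs_mul, abs_of_nonneg (by norm_num : (0:ℝ) ≤ 1/2)]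
        refine mul_le_mul_of_nonneg_left (mul_le_mul_of_nonneg_left ?_ (abs_nonneg _))
          (by norm_num)
        rw [hNnorm s, abs_of_nonneg (by positivity)]
        exact pow_le_pow_left₀ (norm_nonneg _) hs 2
      · simpa using (hh'bot.abs.mul_const ((‖c‖ + 1) ^ 2)).const_mul (1/2 : ℝ)
    have := t1.sub t2
    rw [sub_zero] at this
    exact this
  -- FTC on ℝ
  have hintA : Integrable (fun s : ℝ => h s * ‖deriv u s‖ ^ 2
      + (h s * V s - 1 / 2 * deriv (deriv h) s) * ‖u s‖ ^ 2) := hint1.add hint2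
  have hGint : Integrable G := hintA.add hint3
  have hkey2 : ∫ s, G s = 0 - 0 :=
    integral_of_hasDerivAt_of_tendsto hderivF hGint hFbot hFtop
  rw [sub_zero] at hkey2
  simp only [hG] at hkey2
  rw [integral_add hintA hint3] at hkey2
  linarith
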